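/- In an ẅ-regular T1 space X, every infinite subset I ⊆ X contains an infinite subset D that is strictly discrete in X (there exist pairwise disjoint open neighborhoods of the points of D). -/

import Mathlib

open Filter Topology

/-- A set with no accumulation points is closed. -/
lemma noAcc_isClosed {X : Type*} [TopologicalSpace X] {S : Set X}
    (h : ∀ x : X, ¬ AccPt x (𝓟 S)) : IsClosed S := by
  have hsub : closure S ⊆ S := by
    intro x hx
    by_contra hxS
    apply h x
    rw [accPt_principal_iff_clusterPt]
    have hSS : S \ {x} = S := by
      ext y; simp only [Set.mem_diff, Set.mem_singleton_iff]
      exact ⟨fun h => h.1, fun hy => ⟨hy, fun hyx => hxS (hyx ▸ hy)⟩⟩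
    rw [hSS, ← mem_closure_iff_clusterPt]
    exact hx
  have : closure S = S := Set.Subset.antisymm hsub subset_closure
  rw [← this]; exact isClosed_closure

/-- Singletons have no accumulation points in a T1 space. -/
lemma noAcc_singleton {X : Type*} [TopologicalSpace X] [T1Space X] (y : X) :
    ∀ x : X, ¬ AccPt x (𝓟 ({y} : Set X)) := by
  intro x hx
  rw [accPt_principal_iff_clusterPt] at hx
  rcases eq_or_ne x y with rfl | hxy
  · rw [Set.diff_self] at hx
    simp only [principal_empty] at hx
    exact hx.ne (by simp)
  · have hSS : ({y} : Set X) \ {x} = {y} := by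
      ext z; simp only [Set.mem_diff, Set.mem_singleton_iff]
      exact ⟨fun h => h.1, fun hz => ⟨hz, by rintro rfl; exact hxy hz⟩⟩
    rw [hSS, ← mem_closure_iff_clusterPt, closure_singleton] at hx
    exact hxy hx

/-- Package an injective sequence with pairwise disjoint open neighborhoods. -/
lemma pack {X : Type*} [TopologicalSpace X] {I : Set X} (f : ℕ → X)
    (hinj : Function.Injective f) (hfI : ∀ n, f n ∈ I) (Os : ℕ → Set X)
    (hopen : ∀ n, IsOpen (Os n)) (hmem : ∀ n, f n ∈ Os n)
    (hdisj : ∀ m n, m ≠ n → Disjoint (Os m) (Os n)) :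
    ∃ D ⊆ I, D.Infinite ∧
      ∃ O : X → Set X, (∀ d ∈ D, IsOpen (O d) ∧ d ∈ O d) ∧
        D.PairwiseDisjoint O := by
  refine ⟨Set.range f, by rintro _ ⟨n, rfl⟩; exact hfI n,
    Set.infinite_range_of_injective hinj, fun x => Os (Function.invFun f x), ?_, ?_⟩
  · rintro _ ⟨n, rfl⟩
    show IsOpen (Os (Function.invFun f (f n))) ∧ f n ∈ Os (Function.invFun f (f n))
    rw [Function.leftInverse_invFun hinj n]
    exact ⟨hopen n, hmem n⟩
  · rintro _ ⟨m, rfl⟩ _ ⟨n, rfl⟩ hne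
    have : Function.onFun Disjoint (fun x => Os (Function.invFun f x)) (f m) (f n) =
        Disjoint (Os m) (Os n) := by
      rw [Function.onFun, Function.leftInverse_invFun hinj m,
        Function.leftInverse_invFun hinj n]
    rw [this]
    exact hdisj m n (fun h => hne (h ▸ rfl))

/-- In a ẅ-regular T1 space `X`, every infinite `I ⊆ X` contains an infinite
subset `D` that is strictly discrete in `X`. -/
theorem stmt7 {X : Type*} [TopologicalSpace X] [T1Space X]
    (hreg : ∀ F : Set X, IsClosed F → (∀ x : X, ¬ AccPt x (𝓟 F)) →
      ∀ x ∉ F, ∃ U V : Set X, IsOpen U ∧ IsOpen V ∧ F ⊆ U ∧ x ∈ V ∧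
        Disjoint U V)
    (I : Set X) (hI : I.Infinite) :
    ∃ D ⊆ I, D.Infinite ∧
      ∃ O : X → Set X, (∀ d ∈ D, IsOpen (O d) ∧ d ∈ O d) ∧
        D.PairwiseDisjoint O := by
  -- Hausdorff separation from hreg applied to singletons
  have haus : ∀ x y : X, x ≠ y → ∃ U V : Set X, IsOpen U ∧ IsOpen V ∧ x ∈ U ∧ y ∈ V ∧
      Disjoint U V := by
    intro x y hxy
    obtain ⟨U, V, hU, hV, hxU, hyV, hd⟩ :=
      hreg {x} isClosed_singleton (noAcc_singleton x) y (by simpa using (Ne.symm hxy))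
    exact ⟨U, V, hU, hV, hxU rfl, hyV, hd⟩
  set e := Set.Infinite.natEmbedding I hI with he
  set f : ℕ → X := fun n => (e n : X) with hf
  have hinj : Function.Injective f := fun m n h => e.injective (Subtype.val_injective h)
  have hfI : ∀ n, f n ∈ I := fun n => (e n).2
  by_cases hacc : ∃ x, AccPt x (𝓟 (Set.range f))
  · -- Case 2: an accumulation point exists; use Hausdorff separation recursively.
    obtain ⟨x, hx⟩ := hacc
    rw [accPt_iff_nhds] at hx
    have step : ∀ W : Set X, IsOpen W → x ∈ W → ∃ d O W' : _,
        d ∈ I ∧ d ∈ O ∧ IsOpen O ∧ IsOpen W' ∧ x ∈ W' ∧ O ⊆ W ∧ W' ⊆ W ∧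
        Disjoint O W' := by
      intro W hW hxW
      obtain ⟨y, ⟨hyW, hyA⟩, hyx⟩ := hx W (hW.mem_nhds hxW)
      obtain ⟨U, V, hU, hV, hxU, hyV, hUV⟩ := haus x y (Ne.symm hyx)
      obtain ⟨n, rfl⟩ := hyA
      exact ⟨f n, V ∩ W, U ∩ W, hfI n, ⟨hyV, hyW⟩, hV.inter hW, hU.inter hW,
        ⟨hxU, hxW⟩, Set.inter_subset_right, Set.inter_subset_right,
        (hUV.symm.mono Set.inter_subset_left Set.inter_subset_left)⟩
    haveI : Nonempty X := ⟨x⟩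
    choose! dF OF WF h1 h2 h3 h4 h5 h6 h7 h8 using step
    let g : ℕ → Set X := fun n => Nat.rec Set.univ (fun _ W => WF W) n
    have hg0 : g 0 = Set.univ := rfl
    have hgs : ∀ n, g (n + 1) = WF (g n) := fun n => rfl
    have hg : ∀ n, IsOpen (g n) ∧ x ∈ g n := by
      intro n
      induction n with
      | zero => exact ⟨isOpen_univ, Set.mem_univ x⟩
      | succ n ih => exact ⟨h4 (g n) ih.1 ih.2, h5 (g n) ih.1 ih.2⟩
    set d : ℕ → X := fun n => dF (g n) with hd
    set Os : ℕ → Set X := fun n => OF (g n) with hOs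
    have hdI : ∀ n, d n ∈ I := fun n => h1 (g n) (hg n).1 (hg n).2
    have hdO : ∀ n, d n ∈ Os n := fun n => h2 (g n) (hg n).1 (hg n).2
    have hOopen : ∀ n, IsOpen (Os n) := fun n => h3 (g n) (hg n).1 (hg n).2
    have hOsub : ∀ n, Os n ⊆ g n := fun n => h6 (g n) (hg n).1 (hg n).2
    have hWsub : ∀ n, g (n + 1) ⊆ g n := fun n => h7 (g n) (hg n).1 (hg n).2
    have hOW : ∀ n, Disjoint (Os n) (g (n + 1)) := fun n => h8 (g n) (hg n).1 (hg n).2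
    have hmono : ∀ m n, m ≤ n → g n ⊆ g m := by
      intro m n hmn
      induction n, hmn using Nat.le_induction with
      | base => exact subset_rfl
      | succ n hmn ih => exact (hWsub n).trans ih
    have key : ∀ m n, m < n → Disjoint (Os m) (Os n) := by
      intro m n hmn
      exact (hOW m).mono_right ((hOsub n).trans (hmono (m + 1) n hmn))
    have hdisj : ∀ m n, m ≠ n → Disjoint (Os m) (Os n) := by
      intro m n hmn
      rcases hmn.lt_or_gt with h | h
      · exact key m n h
      · exact (key n m h).symm
    have hdinj : Function.Injective d := by
      intro m n hmn
      by_contra hne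
      exact (hdisj m n hne).ne_of_mem (hdO m) (hdO n) hmn
    exact pack d hdinj hdI Os hOopen hdO hdisj
  · -- Case 1: no accumulation point; tails of the sequence are closed discrete.
    push_neg at hacc
    have hFacc : ∀ n : ℕ, ∀ x : X, ¬ AccPt x (𝓟 (f '' Set.Ioi n)) := by
      intro n x h
      exact hacc x (h.mono (principal_mono.2 (Set.image_subset_range f _)))
    have hFclosed : ∀ n, IsClosed (f '' Set.Ioi n) := fun n => noAcc_isClosed (hFacc n)
    have hnot : ∀ n, f n ∉ f '' Set.Ioi n := by
      rintro n ⟨m, hm, hfm⟩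
      rw [Set.mem_Ioi] at hm
      exact absurd (hinj hfm) (by omega)
    choose U V hU hV hFU hfV hUV using fun n =>
      hreg _ (hFclosed n) (hFacc n) (f n) (hnot n)
    set Os : ℕ → Set X := fun n => V n ∩ ⋂ m ∈ Finset.range n, U m with hOs
    have hOopen : ∀ n, IsOpen (Os n) :=
      fun n => (hV n).inter (isOpen_biInter_finset fun m _ => hU m)
    have hOmem : ∀ n, f n ∈ Os n := by
      intro n
      refine ⟨hfV n, Set.mem_iInter₂.2 fun m hm => hFU m ⟨n, ?_, rfl⟩⟩
      rw [Set.mem_Ioi]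
      exact Finset.mem_range.1 hm
    have key : ∀ m n, m < n → Disjoint (Os m) (Os n) := by
      intro m n hmn
      have hsubm : Os m ⊆ V m := Set.inter_subset_left
      have hsubn : Os n ⊆ U m := by
        refine Set.inter_subset_right.trans ?_
        exact Set.biInter_subset_of_mem (Finset.mem_range.2 hmn)
      exact (hUV m).symm.mono hsubm hsubn
    have hdisj : ∀ m n, m ≠ n → Disjoint (Os m) (Os n) := by
      intro m n hmn
      rcases hmn.lt_or_gt with h | h
      · exact key m n h
      · exact (key n m h).symm
    exact pack f hinj hfI Os hOopen hOmem hdisj
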